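/- For every finite simple graph G, the number of maximal independent sets of G is at least 2^ν₀(G), where ν₀(G) is the induced matching number of G. -/

import Mathlib

variable {V : Type*}

/-- `S` is an independent set of `G`: no two vertices of `S` are adjacent. -/
def IsIndepSet (G : SimpleGraph V) (S : Set V) : Prop :=
  ∀ ⦃u v : V⦄, u ∈ S → v ∈ S → ¬ G.Adj u v

/-- `S` is a maximal independent set of `G`. -/
def IsMaxIndepSet (G : SimpleGraph V) (S : Set V) : Prop :=
  IsIndepSet G S ∧ ∀ T : Set V, IsIndepSet G T → S ⊆ T → S = T

/-- `m(G)`: the number of maximal independent sets of `G`. -/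
noncomputable def numMaxIndep (G : SimpleGraph V) : ℕ :=
  {S : Set V | IsMaxIndepSet G S}.ncard

/-- `C` is a vertex cover of `G`: every edge has at least one endpoint in `C`. -/
def IsVertexCover (G : SimpleGraph V) (C : Set V) : Prop :=
  ∀ ⦃u v : V⦄, G.Adj u v → u ∈ C ∨ v ∈ C

/-- `β(G)`: the minimum size of a vertex cover of `G`. -/
noncomputable def coverNumber (G : SimpleGraph V) : ℕ :=
  sInf {n : ℕ | ∃ C : Set V, IsVertexCover G C ∧ C.ncard = n}

/-- `M` is a matching of `G`: a set of edges of `G`, pairwise sharing no vertex. -/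
def IsMatching (G : SimpleGraph V) (M : Set (Sym2 V)) : Prop :=
  M ⊆ G.edgeSet ∧ ∀ e ∈ M, ∀ f ∈ M, e ≠ f → ∀ v : V, v ∈ e → v ∉ f

/-- `M` is an induced matching of `G`: a matching such that no two distinct
edges of `M` are joined by an edge of `G`. -/
def IsInducedMatching (G : SimpleGraph V) (M : Set (Sym2 V)) : Prop :=
  IsMatching G M ∧ ∀ e ∈ M, ∀ f ∈ M, e ≠ f → ∀ u v : V, u ∈ e → v ∈ f → ¬ G.Adj u v

/-- `ν(G)`: the maximum size of a matching of `G`. -/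
noncomputable def matchingNumber (G : SimpleGraph V) : ℕ :=
  sSup {n : ℕ | ∃ M : Set (Sym2 V), IsMatching G M ∧ M.ncard = n}

/-- `ν₀(G)`: the maximum size of an induced matching of `G`. -/
noncomputable def inducedMatchingNumber (G : SimpleGraph V) : ℕ :=
  sSup {n : ℕ | ∃ M : Set (Sym2 V), IsInducedMatching G M ∧ M.ncard = n}

/-- `G` is bipartite: the vertices split into two sides with every edge crossing. -/
def IsBipartite (G : SimpleGraph V) : Prop :=
  ∃ A : Set V, ∀ ⦃u v : V⦄, G.Adj u v → (u ∈ A ↔ v ∉ A)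

lemma exists_max_ext [Finite V] (G : SimpleGraph V) {S : Set V} (hS : IsIndepSet G S) :
    ∃ T, IsMaxIndepSet G T ∧ S ⊆ T := by
  have hfin : {T : Set V | IsIndepSet G T ∧ S ⊆ T}.Finite := Set.toFinite _
  obtain ⟨T, hT, hmax⟩ := hfin.exists_maximal ⟨S, hS, subset_rfl⟩
  exact ⟨T, ⟨hT.1, fun T' hT' hsub => hsub.antisymm (hmax ⟨hT', hT.2.trans hsub⟩ hsub)⟩, hT.2⟩

/-- For every finite simple graph `G`, `m(G) ≥ 2 ^ ν₀(G)`. -/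
theorem two_pow_inducedMatchingNumber_le_numMaxIndep [Fintype V] (G : SimpleGraph V) :
    2 ^ inducedMatchingNumber G ≤ numMaxIndep G := by
  classical
  -- the set of achievable induced-matching sizes
  set K := {n : ℕ | ∃ M : Set (Sym2 V), IsInducedMatching G M ∧ M.ncard = n} with hK
  have hne : K.Nonempty := ⟨0, ∅, ⟨⟨Set.empty_subset _, by simp⟩, by simp⟩, by simp⟩
  have hbdd : BddAbove K := by
    refine ⟨Nat.card (Sym2 V), ?_⟩
    rintro n ⟨M, _, rfl⟩
    calc M.ncard ≤ (Set.univ : Set (Sym2 V)).ncard :=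
          Set.ncard_le_ncard (Set.subset_univ _) (Set.toFinite _)
      _ = Nat.card (Sym2 V) := Set.ncard_univ _
  obtain ⟨M, hM, hcard⟩ := Nat.sSup_mem hne hbdd
  rw [inducedMatchingNumber, ← hK, ← hcard]
  -- choose the two endpoints of each edge of M
  have hab : ∀ e : M, ∃ q : V × V, G.Adj q.1 q.2 ∧ (e : Sym2 V) = s(q.1, q.2) := by
    rintro ⟨e, he⟩
    have he' : e ∈ G.edgeSet := hM.1.1 he
    induction e using Sym2.ind with
    | _ u v => exact ⟨(u, v), he', rfl⟩
  choose q hadj heq using hab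
  -- for each Bool-choice, the chosen endpoints form an independent set
  have hmem : ∀ (e : M) (b : Bool),
      (if b then (q e).1 else (q e).2) ∈ (e : Sym2 V) := by
    intro e b
    rw [heq e]
    cases b
    · exact Sym2.mem_mk_right _ _
    · exact Sym2.mem_mk_left _ _
  have hind : ∀ g : M → Bool,
      IsIndepSet G (Set.range fun e : M => if g e then (q e).1 else (q e).2) := by
    intro g u v hu hv hadj'
    obtain ⟨e, rfl⟩ := hu
    obtain ⟨f, rfl⟩ := hv
    by_cases hef : e = f
    · subst hef
      exact G.irrefl hadj'
    · have hef' : (e : Sym2 V) ≠ (f : Sym2 V) := fun h => hef (Subtype.ext h)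
      exact hM.2 e e.2 f f.2 hef' _ _ (hmem e (g e)) (hmem f (g f)) hadj'
  -- extend each to a maximal independent set
  have hext := fun g : M → Bool => exists_max_ext G (hind g)
  choose T hTmax hTsub using hext
  -- injectivity
  have hinj : Function.Injective T := by
    intro g g' hTT
    by_contra hgg
    obtain ⟨e, he⟩ : ∃ e : M, g e ≠ g' e := by
      by_contra h
      push_neg at h
      exact hgg (funext h)
    have h1 : (if g e then (q e).1 else (q e).2) ∈ T g := hTsub g ⟨e, rfl⟩
    have h2 : (if g' e then (q e).1 else (q e).2) ∈ T g := by
      rw [hTT]; exact hTsub g' ⟨e, rfl⟩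
    have hflip : g' e = !(g e) := by
      cases hge : g e <;> cases hg'e : g' e
      · exact absurd (hge.trans hg'e.symm) he
      · rfl
      · rfl
      · exact absurd (hge.trans hg'e.symm) he
    rw [hflip] at h2
    cases hge : g e
    · rw [hge] at h1 h2
      simp only [Bool.not_false, if_true, if_false] at h1 h2
      exact (hTmax g).1 h2 h1 (hadj e)
    · rw [hge] at h1 h2
      simp only [Bool.not_true, if_true, if_false] at h1 h2
      exact (hTmax g).1 h1 h2 (hadj e)
  -- count
  have hMfin : M.Finite := Set.Finite.subset (Set.toFinite _) hM.1.1
  haveI : Finite M := hMfin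
  have key : Nat.card (M → Bool) ≤ Nat.card {S : Set V // IsMaxIndepSet G S} := by
    have : Finite {S : Set V // IsMaxIndepSet G S} := Subtype.finite
    exact Nat.card_le_card_of_injective (fun g => ⟨T g, hTmax g⟩)
      (fun g g' h => hinj (congrArg Subtype.val h))
  calc 2 ^ M.ncard = Nat.card (M → Bool) := by
        rw [Nat.card_fun, Nat.card_eq_two_iff.mpr ⟨false, true, by simp, by
          ext b; cases b <;> simp⟩, Nat.card_coe_set_eq]
    _ ≤ Nat.card {S : Set V // IsMaxIndepSet G S} := key
    _ = numMaxIndep G := by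
        rw [numMaxIndep]
        exact Nat.card_coe_set_eq _
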